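/- Let Δ ≥ 1 and let T_1, …, T_n be nonempty finite multisets of integers from {1, …, Δ} such that all multisets have the same total sum: Σ_{t∈T_1} t = … = Σ_{t∈T_n} t. Then there exist nonempty submultisets S_1 ⊆ T_1, …, S_n ⊆ T_n with |S_i| ≤ Δ²·Δ! for every i such that Σ_{s∈S_1} s = Σ_{s∈S_2} s = … = Σ_{s∈S_n} s. -/
import Mathlib


/-- one-dimensional subrepresentation lemma.  Nonempty multisets
of integers from `{1, …, Δ}` with equal total sums admit nonempty submultisets
of cardinality at most `Δ²·Δ!` with equal sums. -/
theorem subrepresentation_dim_one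
    (Δ : ℕ) (hΔ : 1 ≤ Δ) (n : ℕ) (T : Fin n → Multiset ℕ)
    (hne : ∀ i, T i ≠ 0)
    (hmem : ∀ i, ∀ t ∈ T i, 1 ≤ t ∧ t ≤ Δ)
    (hsum : ∀ i i', (T i).sum = (T i').sum) :
    ∃ S : Fin n → Multiset ℕ,
      (∀ i, S i ≠ 0) ∧
      (∀ i, S i ≤ T i) ∧
      (∀ i, (S i).card ≤ Δ ^ 2 * Nat.factorial Δ) ∧
      (∀ i i', (S i).sum = (S i').sum) := by
  rcases Nat.eq_zero_or_pos n with rfl | hn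
  · exact ⟨T, hne, fun i => le_rfl, fun i => i.elim0, hsum⟩
  set i0 : Fin n := ⟨0, hn⟩
  by_cases hbig : Δ * Nat.factorial Δ ≤ (T i0).sum
  · -- each T i has a value v with v * count v ≥ Δ!
    have key : ∀ i, ∃ v, 1 ≤ v ∧ v ≤ Δ ∧ Nat.factorial Δ ≤ v * (T i).count v := by
      intro i
      by_contra h
      push_neg at h
      have hsum_lt : (T i).sum < Δ * Nat.factorial Δ := by
        have h1 : (T i).sum = ∑ v ∈ (T i).toFinset, (T i).count v * v := by
          conv_lhs => rw [← Multiset.toFinset_sum_count_nsmul_eq (T i)]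
          rw [Multiset.sum_sum]
          apply Finset.sum_congr rfl
          intro v _
          rw [Multiset.sum_nsmul, Multiset.sum_singleton, smul_eq_mul]
        rw [h1]
        calc ∑ v ∈ (T i).toFinset, (T i).count v * v
            < ∑ v ∈ (T i).toFinset, Nat.factorial Δ := by
              apply Finset.sum_lt_sum_of_nonempty
              · exact ⟨_, Multiset.mem_toFinset.2 (Multiset.exists_mem_of_ne_zero (hne i)).choose_spec⟩
              · intro v hv
                rw [Multiset.mem_toFinset] at hv
                obtain ⟨h1v, hvΔ⟩ := hmem i v hv
                rw [mul_comm]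
                exact h v h1v hvΔ
          _ = (T i).toFinset.card * Nat.factorial Δ := by rw [Finset.sum_const, smul_eq_mul]
          _ ≤ Δ * Nat.factorial Δ := by
              apply Nat.mul_le_mul_right
              have : (T i).toFinset ⊆ Finset.Icc 1 Δ := by
                intro v hv
                rw [Multiset.mem_toFinset] at hv
                exact Finset.mem_Icc.2 (hmem i v hv)
              calc (T i).toFinset.card ≤ (Finset.Icc 1 Δ).card := Finset.card_le_card this
                _ = Δ := by simp
      have := hsum i i0
      omega
    choose v h1v hvΔ hcnt using key
    refine ⟨fun i => Multiset.replicate (Nat.factorial Δ / v i) (v i), ?_, ?_, ?_, ?_⟩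
    · intro i
      have : 1 ≤ Nat.factorial Δ / v i :=
        Nat.one_le_div_iff (h1v i) |>.2 (Nat.le_of_dvd (Nat.factorial_pos Δ) (Nat.dvd_factorial (h1v i) (hvΔ i)))
      intro h
      have := congrArg Multiset.card h
      rw [Multiset.card_replicate, Multiset.card_zero] at this
      omega
    · intro i
      rw [← Multiset.le_count_iff_replicate_le]
      have := Nat.div_le_div_right (c := v i) (hcnt i)
      rwa [Nat.mul_div_cancel_left _ (h1v i)] at this
    · intro i
      rw [Multiset.card_replicate]
      have : Nat.factorial Δ / v i ≤ Nat.factorial Δ := Nat.div_le_self _ _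
      calc Nat.factorial Δ / v i ≤ Nat.factorial Δ := this
        _ ≤ Δ ^ 2 * Nat.factorial Δ := Nat.le_mul_of_pos_left _ (by positivity)
    · intro i i'
      have hs : ∀ j, (Multiset.replicate (Nat.factorial Δ / v j) (v j)).sum = Nat.factorial Δ := by
        intro j
        rw [Multiset.sum_replicate, smul_eq_mul,
          Nat.div_mul_cancel (Nat.dvd_factorial (h1v j) (hvΔ j))]
      rw [hs, hs]
  · push_neg at hbig
    refine ⟨T, hne, fun i => le_rfl, ?_, hsum⟩
    intro i
    have hc : (T i).card ≤ (T i).sum := by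
      have : ∀ x ∈ T i, 1 ≤ x := fun x hx => (hmem i x hx).1
      calc (T i).card = (Multiset.replicate (T i).card 1).sum := by simp
        _ ≤ (T i).sum := by
            rw [← Multiset.map_const' (T i) 1]
            exact Multiset.sum_map_le_sum _ this
    have := hsum i i0
    have hΔ2 : Δ * Nat.factorial Δ ≤ Δ ^ 2 * Nat.factorial Δ :=
      Nat.mul_le_mul_right _ (by nlinarith)
    omega
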